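/- Let Y ∈ Sym(2) be positive definite with λ⁻¹ ≤ det(Y) ≤ λ for λ ≥ 1. Set X = (Y − Id)(Y + Id)⁻¹. Then X is symmetric, ‖X‖ ≤ 1, and |tr(X)| ≤ ((λ−1)/(λ+1))(1 + det X), where ‖·‖ is the operator norm. -/

import Mathlib

open Matrix

/-- Operator (ℓ²→ℓ²) norm of a real 2×2 matrix. -/
noncomputable def opNorm (A : Matrix (Fin 2) (Fin 2) ℝ) : ℝ :=
  ‖Matrix.toEuclideanCLM (𝕜 := ℝ) A‖

lemma quad_key (a b c v0 v1 : ℝ) (ha : 0 < a) (hc : 0 < c) (hd : 0 < a*c - b*b) :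
    ((a*c-b*b+a-c-1)*v0 + 2*b*v1)^2 + (2*b*v0 + (a*c-b*b+c-a-1)*v1)^2 ≤
      (a*c-b*b+a+c+1)^2 * (v0^2 + v1^2) := by
  have hA4 : 0 < 4*((c+1)*(a*c-b*b+a) - b*b) := by nlinarith [mul_pos hc hd]
  have hQ : (4*((c+1)*(a*c-b*b+a) - b*b)) *
      ((a*c-b*b+a+c+1)^2 * (v0^2 + v1^2) -
        (((a*c-b*b+a-c-1)*v0 + 2*b*v1)^2 + (2*b*v0 + (a*c-b*b+c-a-1)*v1)^2)) =
      ((4*((c+1)*(a*c-b*b+a) - b*b))*v0 - 4*b*((a*c-b*b)-1)*v1)^2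
        + 16*(a*c-b*b)*(a*c-b*b+a+c+1)^2*v1^2 := by ring
  nlinarith [hQ, hA4, sq_nonneg ((4*((c+1)*(a*c-b*b+a) - b*b))*v0 - 4*b*((a*c-b*b)-1)*v1),
    mul_nonneg (mul_nonneg (by linarith : (0:ℝ) ≤ 16*(a*c-b*b)) (sq_nonneg (a*c-b*b+a+c+1))) (sq_nonneg v1)]

theorem stmt11 (lam : ℝ) (hlam : 1 ≤ lam) (Y : Matrix (Fin 2) (Fin 2) ℝ)
    (hpos : Y.PosDef) (hdet₁ : lam⁻¹ ≤ Y.det) (hdet₂ : Y.det ≤ lam) :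
    ((Y - 1) * (Y + 1)⁻¹)ᵀ = (Y - 1) * (Y + 1)⁻¹ ∧
      opNorm ((Y - 1) * (Y + 1)⁻¹) ≤ 1 ∧
      |((Y - 1) * (Y + 1)⁻¹).trace| ≤
        (lam - 1) / (lam + 1) * (1 + ((Y - 1) * (Y + 1)⁻¹).det) := by
  have hsym : Y 1 0 = Y 0 1 := by
    have h := congrFun (congrFun hpos.1 0) 1
    simpa [conjTranspose_apply] using h
  set a := Y 0 0 with ha_def
  set b := Y 0 1 with hb_def
  set c := Y 1 1 with hc_def
  have ha : 0 < a := by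
    have := hpos.dotProduct_mulVec_pos (x := ![1,0]) (by simp [Matrix.vecHead, Matrix.vecTail])
    simpa [dotProduct, mulVec, Fin.sum_univ_two] using this
  have hc : 0 < c := by
    have := hpos.dotProduct_mulVec_pos (x := ![0,1]) (by simp [Matrix.vecHead, Matrix.vecTail])
    simpa [dotProduct, mulVec, Fin.sum_univ_two] using this
  have hdet : Y.det = a*c - b*b := by
    rw [Matrix.det_fin_two, hsym]
  have hd : 0 < a*c - b*b := hdet ▸ hpos.det_pos
  have hD : 0 < a*c - b*b + a + c + 1 := by linarith
  have hD0 : a*c - b^2 + a + c + 1 ≠ 0 := by rw [sq]; exact hD.ne'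
  have hinv : (Y + 1)⁻¹ = (a*c - b*b + a + c + 1)⁻¹ • !![c+1, -b; -b, a+1] := by
    apply Matrix.inv_eq_right_inv
    ext i j
    fin_cases i <;> fin_cases j <;>
      · simp [Matrix.mul_apply, Fin.sum_univ_two, Matrix.add_apply, Matrix.one_apply,
          Matrix.smul_apply, hsym, smul_eq_mul, ← ha_def, ← hb_def, ← hc_def]
        field_simp
        ring
  have hX : (Y - 1) * (Y + 1)⁻¹ = (a*c - b*b + a + c + 1)⁻¹ •
      !![a*c-b*b+a-c-1, 2*b; 2*b, a*c-b*b+c-a-1] := by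
    rw [hinv]
    ext i j
    fin_cases i <;> fin_cases j <;>
      · simp [Matrix.mul_apply, Fin.sum_univ_two, Matrix.sub_apply, Matrix.one_apply,
          Matrix.smul_apply, hsym, smul_eq_mul]
        ring
  rw [hX]
  refine ⟨?_, ?_, ?_⟩
  · ext i j
    fin_cases i <;> fin_cases j <;> simp [Matrix.smul_apply]
  · unfold opNorm
    apply ContinuousLinearMap.opNorm_le_bound _ zero_le_one
    intro v
    rw [one_mul, EuclideanSpace.norm_eq, EuclideanSpace.norm_eq]
    apply Real.sqrt_le_sqrt
    rw [Fin.sum_univ_two, Fin.sum_univ_two]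
    set A := (a*c - b*b + a + c + 1)⁻¹ • !![a*c-b*b+a-c-1, 2*b; 2*b, a*c-b*b+c-a-1]
      with hA_def
    have e0 : (Matrix.toEuclideanCLM (𝕜 := ℝ) A v) 0 = A 0 0 * v 0 + A 0 1 * v 1 := by
      rw [show (Matrix.toEuclideanCLM (𝕜 := ℝ) A v) 0 = A.mulVec (fun i => v i) 0 from rfl]
      simp [Matrix.mulVec, dotProduct, Fin.sum_univ_two]
    have e1 : (Matrix.toEuclideanCLM (𝕜 := ℝ) A v) 1 = A 1 0 * v 0 + A 1 1 * v 1 := by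
      rw [show (Matrix.toEuclideanCLM (𝕜 := ℝ) A v) 1 = A.mulVec (fun i => v i) 1 from rfl]
      simp [Matrix.mulVec, dotProduct, Fin.sum_univ_two]
    rw [e0, e1]
    simp only [Real.norm_eq_abs, sq_abs, hA_def, Matrix.smul_apply, smul_eq_mul,
      Matrix.cons_val', Matrix.cons_val_zero, Matrix.cons_val_one, Matrix.head_cons,
      Matrix.empty_val', Matrix.cons_val_fin_one, Matrix.head_fin_const]
    have key := quad_key a b c (v 0) (v 1) ha hc hd
    have hD2 : (0:ℝ) < (a*c - b*b + a + c + 1)^2 := by positivity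
    have step := mul_le_mul_of_nonneg_left key (le_of_lt (by positivity :
      (0:ℝ) < ((a*c - b*b + a + c + 1)⁻¹)^2))
    have hone : ((a*c - b*b + a + c + 1)⁻¹)^2 * ((a*c-b*b+a+c+1)^2 * (v 0^2 + v 1^2))
        = v 0^2 + v 1^2 := by
      rw [← mul_assoc, ← mul_pow, inv_mul_cancel₀ hD.ne', one_pow, one_mul]
    calc ((a*c - b*b + a + c + 1)⁻¹ * (a*c-b*b+a-c-1) * v 0
            + (a*c - b*b + a + c + 1)⁻¹ * (2*b) * v 1)^2
          + ((a*c - b*b + a + c + 1)⁻¹ * (2*b) * v 0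
            + (a*c - b*b + a + c + 1)⁻¹ * (a*c-b*b+c-a-1) * v 1)^2
        = ((a*c - b*b + a + c + 1)⁻¹)^2 *
            (((a*c-b*b+a-c-1)*(v 0) + 2*b*(v 1))^2
              + (2*b*(v 0) + (a*c-b*b+c-a-1)*(v 1))^2) := by ring
      _ ≤ ((a*c - b*b + a + c + 1)⁻¹)^2 *
            ((a*c-b*b+a+c+1)^2 * ((v 0)^2 + (v 1)^2)) := step
      _ = (v 0)^2 + (v 1)^2 := hone
  · have htr : ((a*c - b*b + a + c + 1)⁻¹ •
        !![a*c-b*b+a-c-1, 2*b; 2*b, a*c-b*b+c-a-1] :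
        Matrix (Fin 2) (Fin 2) ℝ).trace
        = (a*c - b*b + a + c + 1)⁻¹ * (2*(a*c-b*b-1)) := by
      simp [Matrix.trace_fin_two, Matrix.smul_apply, smul_eq_mul]
      ring
    have hdt : ((a*c - b*b + a + c + 1)⁻¹ •
        !![a*c-b*b+a-c-1, 2*b; 2*b, a*c-b*b+c-a-1] :
        Matrix (Fin 2) (Fin 2) ℝ).det
        = (a*c - b*b + a + c + 1)⁻¹ * (a*c-b*b-(a+c)+1) := by
      rw [Matrix.det_fin_two]
      simp only [Matrix.smul_apply, smul_eq_mul, Matrix.cons_val', Matrix.cons_val_zero,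
        Matrix.cons_val_one, Matrix.head_cons, Matrix.empty_val', Matrix.cons_val_fin_one,
        Matrix.head_fin_const, Matrix.of_apply]
      field_simp
      ring
    rw [htr, hdt]
    rw [hdet] at hdet₁ hdet₂
    have hlam0 : (0:ℝ) < lam := lt_of_lt_of_le one_pos hlam
    have hld : 1 ≤ lam * (a*c - b*b) := by
      have h := mul_le_mul_of_nonneg_left hdet₁ hlam0.le
      rwa [mul_inv_cancel₀ hlam0.ne'] at h
    have hl1 : (0:ℝ) < lam + 1 := by linarith
    have hrhs : 1 + (a*c - b*b + a + c + 1)⁻¹ * (a*c-b*b-(a+c)+1)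
        = (a*c - b*b + a + c + 1)⁻¹ * (2*((a*c-b*b)+1)) := by
      field_simp
      ring
    rw [hrhs]
    have hDi : 0 < (a*c - b*b + a + c + 1)⁻¹ := by positivity
    rw [abs_le]
    constructor
    · rw [neg_le]
      have hcore2 : -(2*(a*c-b*b-1)) ≤ (lam-1)/(lam+1) * (2*((a*c-b*b)+1)) := by
        rw [div_mul_eq_mul_div, le_div_iff₀ hl1]
        nlinarith [hld]
      calc -((a*c - b*b + a + c + 1)⁻¹ * (2*(a*c-b*b-1)))
          = (a*c - b*b + a + c + 1)⁻¹ * (-(2*(a*c-b*b-1))) := by ring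
        _ ≤ (a*c - b*b + a + c + 1)⁻¹ * ((lam-1)/(lam+1) * (2*((a*c-b*b)+1))) :=
            mul_le_mul_of_nonneg_left hcore2 hDi.le
        _ = (lam - 1)/(lam + 1) * ((a*c - b*b + a + c + 1)⁻¹ * (2*((a*c-b*b)+1))) := by ring
    · have hcore : 2*(a*c-b*b-1) ≤ (lam-1)/(lam+1) * (2*((a*c-b*b)+1)) := by
        rw [div_mul_eq_mul_div, le_div_iff₀ hl1]
        nlinarith [hdet₂]
      calc (a*c - b*b + a + c + 1)⁻¹ * (2*(a*c-b*b-1))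
          ≤ (a*c - b*b + a + c + 1)⁻¹ * ((lam-1)/(lam+1) * (2*((a*c-b*b)+1))) :=
            mul_le_mul_of_nonneg_left hcore hDi.le
        _ = (lam - 1)/(lam + 1) * ((a*c - b*b + a + c + 1)⁻¹ * (2*((a*c-b*b)+1))) := by ring
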